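/- Let P be a finite poset, r \ge 2 an integer, and P_r = P \times Q_{r-1} with the product order, where Q_{r-1} = {1, ..., r-1} is a chain. If every minimal element w of the poset T(P_r) satisfies w(-\infty) = rank \hat{P_r}, then every minimal element v of the poset T(P) satisfies v(-\infty) = rank \hat{P}. (That is, if the generalized Hibi ring R_r(P) = R[I(P_r)] is level, then the Hibi ring R[I(P)] is level.) -/

import Mathlib

open Classical

/-- `Hat P` is the poset `P` with a new least element `-∞ = ⊥` and a new
greatest element `∞ = ⊤` adjoined. -/
abbrev Hat (P : Type*) := WithBot (WithTop P)

/-- The canonical inclusion of `P` into `Hat P`. -/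
def toHat {P : Type*} (x : P) : Hat P := ((x : WithTop P) : WithBot (WithTop P))

/-- The rank of a poset: the maximal length (number of covering steps) of a
chain, encoded as the maximal `n` admitting a strictly increasing sequence of
`n + 1` elements. -/
noncomputable def rankN (Q : Type*) [Preorder Q] : ℕ :=
  sSup {n : ℕ | ∃ f : Fin (n + 1) → Q, StrictMono f}

/-- The height of `x` in a poset `Q`: the rank of the subposet `{y | y ≤ x}`. -/
noncomputable def heightN {Q : Type*} [Preorder Q] (x : Q) : ℕ :=
  sSup {n : ℕ | ∃ f : Fin (n + 1) → Q, StrictMono f ∧ ∀ i, f i ≤ x}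

/-- The depth of `x` in a poset `Q`: the rank of the subposet `{y | x ≤ y}`. -/
noncomputable def depthN {Q : Type*} [Preorder Q] (x : Q) : ℕ :=
  sSup {n : ℕ | ∃ f : Fin (n + 1) → Q, StrictMono f ∧ ∀ i, x ≤ f i}

/-- `v` belongs to `S(P)`: `v : Hat P → ℕ` is order-reversing with `v ∞ = 0`. -/
def memS (P : Type*) [PartialOrder P] (v : Hat P → ℕ) : Prop :=
  v ⊤ = 0 ∧ ∀ p q : Hat P, p ≤ q → v q ≤ v p

/-- `v` belongs to `T(P)`: `v : Hat P → ℕ` is strictly order-reversing with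
`v ∞ = 0`. -/
def memT (P : Type*) [PartialOrder P] (v : Hat P → ℕ) : Prop :=
  v ⊤ = 0 ∧ ∀ p q : Hat P, p < q → v q < v p

/-- The partial order of `T(P)`: `v ≥ w` iff `v` dominates `w` pointwise and the
pointwise difference `v - w` is order-reversing. -/
def Tge (P : Type*) [PartialOrder P] (v w : Hat P → ℕ) : Prop :=
  (∀ p : Hat P, w p ≤ v p) ∧ ∀ p q : Hat P, p ≤ q → v q - w q ≤ v p - w p

/-- `v` is a minimal element of the poset `T(P)`. -/
def IsMinT (P : Type*) [PartialOrder P] (v : Hat P → ℕ) : Prop :=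
  memT P v ∧ ∀ w : Hat P → ℕ, memT P w → Tge P v w → w = v

/-- A poset is pure if all its maximal chains have the same length, equivalently
the same cardinality. -/
def IsPure (P : Type*) [PartialOrder P] : Prop :=
  ∀ C D : Set P, IsMaxChain (· ≤ ·) C → IsMaxChain (· ≤ ·) D → C.ncard = D.ncard

section Aux

set_option linter.unusedSectionVars false

variable {Q : Type*} [PartialOrder Q]

instance {α : Type*} [Fintype α] : Fintype (WithBot α) :=
  inferInstanceAs (Fintype (Option α))

instance {α : Type*} [Fintype α] : Fintype (WithTop α) :=
  inferInstanceAs (Fintype (Option α))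

lemma hat_cases (x : Hat Q) : x = ⊥ ∨ x = ⊤ ∨ ∃ q, x = toHat q := by
  induction x using WithBot.recBotCoe with
  | bot => left; rfl
  | coe y =>
    induction y using WithTop.recTopCoe with
    | top => right; left; rfl
    | coe q => right; right; exact ⟨q, rfl⟩

lemma bot_lt_toHat (q : Q) : (⊥ : Hat Q) < toHat q := WithBot.bot_lt_coe _

lemma toHat_lt_top (q : Q) : toHat q < (⊤ : Hat Q) := by
  simp [toHat]
  exact WithBot.coe_lt_coe.2 (WithTop.coe_lt_top q)

lemma hat_bot_lt_top : (⊥ : Hat Q) < ⊤ := WithBot.bot_lt_coe _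

lemma toHat_lt_toHat {a b : Q} : toHat a < toHat b ↔ a < b := by simp [toHat]

lemma toHat_le_toHat {a b : Q} : toHat a ≤ toHat b ↔ a ≤ b := by simp [toHat]

lemma hat_lt_cases {x y : Hat Q} (hxy : x < y) :
    (x = ⊥ ∧ y = ⊤) ∨ (x = ⊥ ∧ ∃ b, y = toHat b) ∨
    (∃ a, x = toHat a ∧ y = ⊤) ∨ (∃ a b, x = toHat a ∧ y = toHat b ∧ a < b) := by
  rcases hat_cases x with rfl | rfl | ⟨a, rfl⟩ <;>
    rcases hat_cases y with rfl | rfl | ⟨b, rfl⟩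
  · exact absurd hxy (lt_irrefl _)
  · exact Or.inl ⟨rfl, rfl⟩
  · exact Or.inr (Or.inl ⟨rfl, b, rfl⟩)
  · exact absurd hxy not_lt_bot
  · exact absurd hxy (lt_irrefl _)
  · exact absurd hxy not_top_lt
  · exact absurd hxy not_lt_bot
  · exact Or.inr (Or.inr (Or.inl ⟨a, rfl, rfl⟩))
  · exact Or.inr (Or.inr (Or.inr ⟨a, b, rfl, rfl, toHat_lt_toHat.mp hxy⟩))

lemma memT_antitone {v : Hat Q → ℕ} (hv : memT Q v) :
    ∀ p q : Hat Q, p ≤ q → v q ≤ v p := by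
  intro p q hpq
  rcases hpq.lt_or_eq with h | rfl
  · exact le_of_lt (hv.2 _ _ h)
  · exact le_rfl

lemma nat_sSup_le {S : Set ℕ} {m : ℕ} (h : ∀ n ∈ S, n ≤ m) : sSup S ≤ m := by
  rcases S.eq_empty_or_nonempty with rfl | hS
  · simp
  · exact csSup_le hS h

lemma nat_le_sSup {S : Set ℕ} (hb : BddAbove S) {m : ℕ} (h : m ∈ S) : m ≤ sSup S :=
  le_csSup hb h

lemma fin_gain {n : ℕ} (φ : Fin (n + 1) → ℕ) (h : StrictMono φ) :
    ∀ k, (hk : k < n + 1) → φ ⟨0, Nat.succ_pos n⟩ + k ≤ φ ⟨k, hk⟩ := by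
  intro k
  induction k with
  | zero => intro hk; simp
  | succ m ih =>
    intro hk
    have h1 : (⟨m, by omega⟩ : Fin (n + 1)) < ⟨m + 1, hk⟩ := by
      simp [Fin.lt_def]
    have h2 := h h1
    have h3 := ih (by omega)
    omega

lemma memT_drop {v : Hat Q → ℕ} (hv : memT Q v) {n : ℕ}
    (f : Fin (n + 1) → Hat Q) (hf : StrictMono f) :
    v (f ⟨n, lt_add_one n⟩) + n ≤ v (f ⟨0, Nat.succ_pos n⟩) := by
  have hle : ∀ i : Fin (n + 1), v (f i) ≤ v (f ⟨0, Nat.succ_pos n⟩) := by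
    intro i
    exact memT_antitone hv _ _ (hf.monotone (by simp [Fin.le_def]))
  have hφ : StrictMono (fun i : Fin (n + 1) => v (f ⟨0, Nat.succ_pos n⟩) - v (f i)) := by
    intro i j hij
    have h1 := hv.2 _ _ (hf hij)
    have h2 := hle i
    have h3 := hle j
    simp only [Fin.lt_def]
    omega
  have hg := fin_gain _ hφ n (lt_add_one n)
  have h4 := hle ⟨n, lt_add_one n⟩
  omega

/-- Every element of `T(Q)` has value at `⊥` at least the rank of `Hat Q`. -/
lemma rank_le_vbot {v : Hat Q → ℕ} (hv : memT Q v) : rankN (Hat Q) ≤ v ⊥ := by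
  apply nat_sSup_le
  rintro n ⟨f, hf⟩
  have h1 := memT_drop hv f hf
  have h2 : v (f ⟨0, Nat.succ_pos n⟩) ≤ v ⊥ := memT_antitone hv _ _ bot_le
  omega

variable [Fintype Q]

lemma chain_card {n : ℕ} (f : Fin (n + 1) → Q) (hf : StrictMono f) :
    n < Fintype.card Q := by
  have := Fintype.card_le_of_injective f hf.injective
  simpa using this

lemma rank_bdd : BddAbove {n : ℕ | ∃ f : Fin (n + 1) → Q, StrictMono f} :=
  ⟨Fintype.card Q, by rintro n ⟨f, hf⟩; exact le_of_lt (chain_card f hf)⟩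

lemma height_bdd (x : Q) :
    BddAbove {n : ℕ | ∃ f : Fin (n + 1) → Q, StrictMono f ∧ ∀ i, f i ≤ x} :=
  ⟨Fintype.card Q, by rintro n ⟨f, hf, -⟩; exact le_of_lt (chain_card f hf)⟩

lemma height_nonempty (x : Q) :
    Set.Nonempty {n : ℕ | ∃ f : Fin (n + 1) → Q, StrictMono f ∧ ∀ i, f i ≤ x} := by
  refine ⟨0, fun _ => x, ?_, fun _ => le_rfl⟩
  intro i j hij
  exact absurd (Fin.lt_def.mp hij) (by omega)

lemma height_le_rank (x : Q) : heightN x ≤ rankN Q := by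
  apply nat_sSup_le
  rintro n ⟨f, hf, -⟩
  exact nat_le_sSup rank_bdd ⟨f, hf⟩

lemma height_mono {x y : Q} (hxy : x ≤ y) : heightN x ≤ heightN y := by
  apply nat_sSup_le
  rintro n ⟨f, hf, hle⟩
  exact nat_le_sSup (height_bdd y) ⟨f, hf, fun i => le_trans (hle i) hxy⟩

lemma height_strict_mono {x y : Q} (hxy : x < y) : heightN x < heightN y := by
  obtain ⟨f, hf, hle⟩ := Nat.sSup_mem (height_nonempty x) (height_bdd x)
  have hmem : heightN x + 1 ∈
      {m : ℕ | ∃ f : Fin (m + 1) → Q, StrictMono f ∧ ∀ i, f i ≤ y} := by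
    refine ⟨fun i => if h : i.val < heightN x + 1 then f ⟨i.val, h⟩ else y, ?_, ?_⟩
    · intro i j hij
      have hij' := Fin.lt_def.mp hij
      have hi2 := i.isLt
      have hj2 := j.isLt
      by_cases hj : j.val < heightN x + 1
      · have hi : i.val < heightN x + 1 := by omega
        simp only [dif_pos hi, dif_pos hj]
        exact hf (Fin.mk_lt_mk.2 (by omega))
      · have hi : i.val < heightN x + 1 := by omega
        simp only [dif_pos hi, dif_neg hj]
        exact lt_of_le_of_lt (hle _) hxy
    · intro i
      by_cases hi : i.val < heightN x + 1
      · simp only [dif_pos hi]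
        exact le_trans (hle _) (le_of_lt hxy)
      · simp only [dif_neg hi]
        exact le_rfl
  have h2 : heightN x + 1 ≤ heightN y := nat_le_sSup (height_bdd y) hmem
  omega

lemma tge_refl (v : Hat Q → ℕ) : Tge Q v v :=
  ⟨fun _ => le_rfl, fun p q _ => by omega⟩

lemma tge_trans {u v w : Hat Q → ℕ} (h1 : Tge Q u v) (h2 : Tge Q v w) : Tge Q u w := by
  obtain ⟨a1, b1⟩ := h1
  obtain ⟨a2, b2⟩ := h2
  refine ⟨fun p => le_trans (a2 p) (a1 p), fun p q hpq => ?_⟩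
  have c1 := b1 p q hpq
  have c2 := b2 p q hpq
  have := a1 p; have := a2 p; have := a1 q; have := a2 q
  omega

/-- Below every element of `T(Q)` there is a minimal element of `T(Q)`. -/
lemma exists_minT_le (w : Hat Q → ℕ) (hw : memT Q w) :
    ∃ w', IsMinT Q w' ∧ Tge Q w w' := by
  have main : ∀ N (u : Hat Q → ℕ), (∑ x, u x) ≤ N → memT Q u →
      ∃ w', IsMinT Q w' ∧ Tge Q u w' := by
    intro N
    induction N using Nat.strong_induction_on with
    | _ N ih =>
      intro u hsum hu
      by_cases hmin : ∀ z : Hat Q → ℕ, memT Q z → Tge Q u z → z = u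
      · exact ⟨u, ⟨hu, hmin⟩, tge_refl u⟩
      · push_neg at hmin
        obtain ⟨z, hz, huz, hne⟩ := hmin
        have hx : ∃ x, z x ≠ u x := by
          by_contra hc
          push_neg at hc
          exact hne (funext hc)
        obtain ⟨x, hxne⟩ := hx
        have hlt : ∑ y, z y < ∑ y, u y := by
          apply Finset.sum_lt_sum (fun i _ => huz.1 i)
          exact ⟨x, Finset.mem_univ x, lt_of_le_of_ne (huz.1 x) hxne⟩
        obtain ⟨w', hw', hzw'⟩ := ih (∑ y, z y) (by omega) z le_rfl hz
        exact ⟨w', hw', tge_trans huz hzw'⟩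
  exact main (∑ x, w x) w le_rfl hw

end Aux

section Prod

variable {P : Type*} [PartialOrder P] {s : ℕ}

/-- Embedding of `Hat P` into `Hat (P × Fin s)` at layer `j`. -/
def embHat (j : Fin s) : Hat P → Hat (P × Fin s) :=
  WithBot.recBotCoe ⊥ (WithTop.recTopCoe ⊤ (fun p => toHat (p, j)))

@[simp] lemma embHat_bot (j : Fin s) : embHat (P := P) j ⊥ = ⊥ := rfl
@[simp] lemma embHat_top (j : Fin s) : embHat (P := P) j ⊤ = ⊤ := rfl
@[simp] lemma embHat_toHat (j : Fin s) (p : P) : embHat j (toHat p) = toHat (p, j) := rfl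

lemma embHat_strictMono (j : Fin s) : StrictMono (embHat (P := P) j) := by
  intro x y hxy
  rcases hat_lt_cases hxy with ⟨rfl, rfl⟩ | ⟨rfl, b, rfl⟩ | ⟨a, rfl, rfl⟩ | ⟨a, b, rfl, rfl, hab⟩
  · simpa using hat_bot_lt_top
  · simpa using bot_lt_toHat (b, j)
  · simpa using toHat_lt_top (a, j)
  · simp only [embHat_toHat]
    exact toHat_lt_toHat.2 (Prod.lt_iff.2 (Or.inl ⟨hab, le_rfl⟩))

/-- Projection of `Hat (P × Fin s)` onto `Hat P`. -/
def projHat : Hat (P × Fin s) → Hat P :=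
  WithBot.recBotCoe ⊥ (WithTop.recTopCoe ⊤ (fun pi => toHat pi.1))

@[simp] lemma projHat_bot : projHat (⊥ : Hat (P × Fin s)) = ⊥ := rfl
@[simp] lemma projHat_top : projHat (⊤ : Hat (P × Fin s)) = ⊤ := rfl
@[simp] lemma projHat_toHat (p : P) (j : Fin s) : projHat (toHat (p, j)) = toHat p := rfl

/-- Layer value of an element of `Hat (P × Fin s)`. -/
def layerVal : Hat (P × Fin s) → ℕ :=
  WithBot.recBotCoe 0 (WithTop.recTopCoe (s - 1) (fun pi => pi.2.val))

@[simp] lemma layerVal_bot : layerVal (⊥ : Hat (P × Fin s)) = 0 := rfl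
@[simp] lemma layerVal_top : layerVal (⊤ : Hat (P × Fin s)) = s - 1 := rfl
@[simp] lemma layerVal_toHat (p : P) (j : Fin s) : layerVal (toHat (p, j)) = j.val := rfl

lemma layerVal_le (x : Hat (P × Fin s)) : layerVal x ≤ s - 1 := by
  rcases hat_cases x with rfl | rfl | ⟨⟨p, j⟩, rfl⟩
  · simp
  · simp
  · simp
    omega

lemma proj_layer_lt {x y : Hat (P × Fin s)} (hxy : x < y) :
    (projHat x < projHat y ∧ layerVal x ≤ layerVal y) ∨
    (projHat x ≤ projHat y ∧ layerVal x < layerVal y) := by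
  rcases hat_lt_cases hxy with ⟨rfl, rfl⟩ | ⟨rfl, b, rfl⟩ | ⟨a, rfl, rfl⟩ |
    ⟨a, b, rfl, rfl, hab⟩
  · exact Or.inl ⟨by simpa using hat_bot_lt_top, by simp⟩
  · obtain ⟨q, j⟩ := b
    exact Or.inl ⟨by simpa using bot_lt_toHat q, by simp⟩
  · obtain ⟨q, j⟩ := a
    refine Or.inl ⟨by simpa using toHat_lt_top q, ?_⟩
    simp
    omega
  · obtain ⟨p, i⟩ := a
    obtain ⟨q, j⟩ := b
    rcases Prod.lt_iff.1 hab with ⟨h1, h2⟩ | ⟨h1, h2⟩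
    · exact Or.inl ⟨by simpa using toHat_lt_toHat.2 h1, by simpa using Fin.le_def.mp h2⟩
    · exact Or.inr ⟨by simpa using toHat_le_toHat.2 h1, by simpa using Fin.lt_def.mp h2⟩

/-- Rank inequality for the product. -/
lemma rank_prod_le [Fintype P] :
    rankN (Hat (P × Fin s)) ≤ rankN (Hat P) + (s - 1) := by
  apply nat_sSup_le
  rintro n ⟨g, hg⟩
  set φ : Fin (n + 1) → ℕ := fun i => heightN (projHat (g i)) + layerVal (g i) with hφdef
  have hφ : StrictMono φ := by
    intro i j hij
    rcases proj_layer_lt (hg hij) with ⟨h1, h2⟩ | ⟨h1, h2⟩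
    · have := height_strict_mono h1
      simp only [hφdef]
      omega
    · have := height_mono h1
      simp only [hφdef]
      omega
  have hg1 := fin_gain φ hφ n (lt_add_one n)
  have h2 : φ ⟨n, lt_add_one n⟩ ≤ rankN (Hat P) + (s - 1) := by
    have := height_le_rank (projHat (g ⟨n, lt_add_one n⟩))
    have := layerVal_le (g ⟨n, lt_add_one n⟩)
    simp only [hφdef]
    omega
  omega

/-- The lift of `v : Hat P → ℕ` to `Hat (P × Fin s) → ℕ`. -/
def liftW (v : Hat P → ℕ) : Hat (P × Fin s) → ℕ :=
  WithBot.recBotCoe (v ⊥ + (s - 1))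
    (WithTop.recTopCoe 0 (fun pi => v (toHat pi.1) + ((s - 1) - pi.2.val)))

@[simp] lemma liftW_bot (v : Hat P → ℕ) : liftW (s := s) v ⊥ = v ⊥ + (s - 1) := rfl
@[simp] lemma liftW_top (v : Hat P → ℕ) : liftW (s := s) v ⊤ = 0 := rfl
@[simp] lemma liftW_toHat (v : Hat P → ℕ) (p : P) (j : Fin s) :
    liftW v (toHat (p, j)) = v (toHat p) + ((s - 1) - j.val) := rfl

lemma liftW_memT {v : Hat P → ℕ} (hv : memT P v) : memT (P × Fin s) (liftW v) := by
  constructor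
  · simp
  · intro x y hxy
    have hbot : ∀ q : P, v (toHat q) < v ⊥ := fun q => hv.2 _ _ (bot_lt_toHat q)
    have htop : ∀ q : P, 0 < v (toHat q) := fun q => by
      have := hv.2 _ _ (toHat_lt_top q)
      omega
    rcases hat_lt_cases hxy with ⟨rfl, rfl⟩ | ⟨rfl, b, rfl⟩ | ⟨a, rfl, rfl⟩ |
      ⟨a, b, rfl, rfl, hab⟩
    · have h1 := hv.2 _ _ (hat_bot_lt_top (Q := P))
      simp
      omega
    · obtain ⟨q, j⟩ := b
      have := hbot q
      have : ((s - 1) - j.val) ≤ s - 1 := by omega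
      simp
      omega
    · obtain ⟨q, j⟩ := a
      have := htop q
      simp
      omega
    · obtain ⟨p, i⟩ := a
      obtain ⟨q, j⟩ := b
      simp only [liftW_toHat]
      have hi : i.val < s := i.isLt
      have hj : j.val < s := j.isLt
      rcases Prod.lt_iff.1 hab with ⟨h1, h2⟩ | ⟨h1, h2⟩ <;> dsimp only at h1 h2
      · have := hv.2 _ _ (toHat_lt_toHat.2 h1)
        have := Fin.le_def.mp h2
        omega
      · have := memT_antitone hv _ _ (toHat_le_toHat.2 h1)
        have := Fin.lt_def.mp h2
        omega

end Prod

/-- **Levelness descends from generalized Hibi rings.** -/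
theorem level_of_generalized_level (P : Type*) [Fintype P] [PartialOrder P]
    (r : ℕ) (hr : 2 ≤ r)
    (h : ∀ w : Hat (P × Fin (r - 1)) → ℕ, IsMinT (P × Fin (r - 1)) w →
      w ⊥ = rankN (Hat (P × Fin (r - 1)))) :
    ∀ v : Hat P → ℕ, IsMinT P v → v ⊥ = rankN (Hat P) := by
  intro v hv
  rcases isEmpty_or_nonempty P with hP | hP
  · -- empty case
    have hcases : ∀ x : Hat P, x = ⊥ ∨ x = ⊤ := by
      intro x
      rcases hat_cases x with hx | hx | ⟨q, -⟩
      · exact Or.inl hx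
      · exact Or.inr hx
      · exact (hP.false q).elim
    have hvbot : 1 ≤ v ⊥ := by
      have := hv.1.2 _ _ (hat_bot_lt_top (Q := P))
      have := hv.1.1
      omega
    set w : Hat P → ℕ := fun x => if x = ⊥ then 1 else 0 with hw
    have hwT : memT P w := by
      constructor
      · simp [hw]
      · intro x y hxy
        rcases hcases x with rfl | rfl
        · rcases hcases y with rfl | rfl
          · exact absurd hxy (lt_irrefl _)
          · simp [hw]
        · exact absurd hxy not_top_lt
    have hge : Tge P v w := by
      constructor
      · intro x
        rcases hcases x with rfl | rfl
        · simpa [hw] using hvbot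
        · simp [hw]
      · intro p q hpq
        rcases hcases q with rfl | rfl
        · have : p = ⊥ := le_bot_iff.mp hpq
          subst this
          exact le_rfl
        · rcases hcases p with rfl | rfl
          · simp [hw, hv.1.1]
          · exact le_rfl
    have hveq := hv.2 w hwT hge
    have hv1 : v ⊥ = 1 := by
      rw [← hveq]; simp [hw]
    rw [hv1]
    -- rankN (Hat P) = 1
    have hle : rankN (Hat P) ≤ 1 := by
      apply nat_sSup_le
      rintro n ⟨f, hf⟩
      by_contra hn
      push_neg at hn
      have h01 : f ⟨0, by omega⟩ < f ⟨1, by omega⟩ := hf (by simp [Fin.lt_def])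
      have h12 : f ⟨1, by omega⟩ < f ⟨2, by omega⟩ := hf (by simp [Fin.lt_def])
      rcases hcases (f ⟨0, by omega⟩) with h0 | h0 <;>
        rcases hcases (f ⟨1, by omega⟩) with h1 | h1 <;>
          rcases hcases (f ⟨2, by omega⟩) with h2 | h2 <;>
            rw [h0, h1] at h01 <;> rw [h1, h2] at h12 <;>
              first
                | exact absurd h01 (lt_irrefl _)
                | exact absurd h12 (lt_irrefl _)
                | exact absurd h01 not_top_lt
                | exact absurd h12 not_top_lt
    have hge1 : 1 ≤ rankN (Hat P) := by
      apply nat_le_sSup rank_bdd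
      refine ⟨fun i => if i.val = 0 then ⊥ else ⊤, ?_⟩
      intro i j hij
      have hij' := Fin.lt_def.mp hij
      have hi0 : i.val < 2 := i.isLt
      have hj0 : j.val < 2 := j.isLt
      have h1 : i.val = 0 := by omega
      have h2 : ¬ j.val = 0 := by omega
      simp only [if_pos h1, if_neg h2]
      exact hat_bot_lt_top
    omega
  · -- nonempty case
    obtain ⟨p₀⟩ := hP
    set s : ℕ := r - 1 with hs
    have hs1 : 1 ≤ s := by omega
    -- the lifted element
    set w : Hat (P × Fin s) → ℕ := liftW v with hwdef
    have hwT : memT (P × Fin s) w := liftW_memT hv.1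
    obtain ⟨w', hw'min, hww'⟩ := exists_minT_le w hwT
    have hw'bot := h w' hw'min
    set b : ℕ := rankN (Hat (P × Fin s)) with hb
    -- b ≥ s : chain ⊥ < (p₀,0) < ... < (p₀,s-1)
    have hbs : s ≤ b := by
      apply nat_le_sSup rank_bdd
      refine ⟨fun i => if h : i.val = 0 then ⊥ else toHat (p₀, ⟨i.val - 1, by omega⟩), ?_⟩
      intro i j hij
      have hij' := Fin.lt_def.mp hij
      by_cases hi : i.val = 0
      · have hj : j.val ≠ 0 := by omega
        simp only [dif_pos hi, dif_neg hj]
        exact bot_lt_toHat _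
      · have hj : j.val ≠ 0 := by omega
        simp only [dif_neg hi, dif_neg hj]
        apply toHat_lt_toHat.2
        apply Prod.lt_iff.2
        right
        refine ⟨le_rfl, ?_⟩
        simp [Fin.lt_def]
        omega
    -- chain from ⊥ to embHat L (toHat q) of length s, for any q : P
    set L : Fin s := ⟨s - 1, by omega⟩ with hL
    have hchain : ∀ q : P, w' (toHat (q, L)) + s ≤ w' ⊥ := by
      intro q
      set f : Fin (s + 1) → Hat (P × Fin s) := fun i =>
        if h : i.val = 0 then ⊥ else toHat (q, ⟨i.val - 1, by omega⟩) with hfdef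
      have hf : StrictMono f := by
        intro i j hij
        have hij' := Fin.lt_def.mp hij
        by_cases hi : i.val = 0
        · have hj : j.val ≠ 0 := by omega
          simp only [hfdef, dif_pos hi, dif_neg hj]
          exact bot_lt_toHat _
        · have hj : j.val ≠ 0 := by omega
          simp only [hfdef, dif_neg hi, dif_neg hj]
          apply toHat_lt_toHat.2
          apply Prod.lt_iff.2
          right
          refine ⟨le_rfl, ?_⟩
          simp [Fin.lt_def]
          omega
      have := memT_drop hw'min.1 f hf
      have hf0 : f ⟨0, Nat.succ_pos s⟩ = ⊥ := by simp [hfdef]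
      have hfn : f ⟨s, lt_add_one s⟩ = toHat (q, L) := by
        simp only [hfdef, hL]
        rw [dif_neg (by omega)]
      rw [hf0, hfn] at this
      exact this
    have hw'ge : s ≤ w' ⊥ := by
      have := hchain p₀
      omega
    -- pointwise data
    have hd1 : ∀ x : Hat (P × Fin s), w' x ≤ w x := hww'.1
    -- define v'
    set v' : Hat P → ℕ := fun x => v x - (w (embHat L x) - w' (embHat L x)) with hv'def
    have hvbotw : w (⊥ : Hat (P × Fin s)) = v ⊥ + (s - 1) := by simp [hwdef]
    have hLval : L.val = s - 1 := rfl
    have hwtoHat : ∀ q : P, w (embHat L (toHat q)) = v (toHat q) := by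
      intro q
      simp only [embHat_toHat, hwdef, liftW_toHat, hLval]
      omega
    have hv'bot : v' ⊥ = w' ⊥ - (s - 1) := by
      have h1 := hd1 ⊥
      simp only [hv'def, embHat_bot]
      rw [hvbotw] at h1 ⊢
      omega
    have hv'toHat : ∀ q : P, v' (toHat q) = w' (toHat (q, L)) := by
      intro q
      have h1 := hd1 (embHat L (toHat q))
      simp only [hv'def]
      rw [hwtoHat q] at h1 ⊢
      have h2 : w' (embHat L (toHat q)) = w' (toHat (q, L)) := by simp
      rw [h2] at h1 ⊢
      omega
    have hv'top : v' ⊤ = 0 := by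
      simp only [hv'def, embHat_top]
      have := hv.1.1
      omega
    -- v' ∈ T(P)
    have hv'T : memT P v' := by
      refine ⟨hv'top, ?_⟩
      intro x y hxy
      rcases hat_lt_cases hxy with ⟨rfl, rfl⟩ | ⟨rfl, q, rfl⟩ | ⟨q, rfl, rfl⟩ |
        ⟨q, q', rfl, rfl, hqq'⟩
      · rw [hv'top, hv'bot]
        omega
      · rw [hv'bot, hv'toHat q]
        have := hchain q
        omega
      · rw [hv'top, hv'toHat q]
        have h0 := hw'min.1.1
        have h1 := hw'min.1.2 _ _ (toHat_lt_top (q, L))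
        omega
      · rw [hv'toHat q, hv'toHat q']
        exact hw'min.1.2 _ _ (toHat_lt_toHat.2 (Prod.lt_iff.2 (Or.inl ⟨hqq', le_rfl⟩)))
    -- difference fact : v x - v' x = w (embHat L x) - w' (embHat L x)
    have hdiff : ∀ x : Hat P, v x - v' x = w (embHat L x) - w' (embHat L x) := by
      intro x
      have h1 := hd1 (embHat L x)
      rcases hat_cases x with rfl | rfl | ⟨q, rfl⟩
      · simp only [embHat_bot] at h1
        simp only [hv'def, embHat_bot]
        rw [hvbotw] at h1 ⊢
        omega
      · simp only [embHat_top] at h1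
        simp only [hv'def, embHat_top]
        have h0 : w (⊤ : Hat (P × Fin s)) = 0 := by simp [hwdef]
        rw [h0] at h1 ⊢
        omega
      · simp only [hv'def]
        rw [hwtoHat q] at h1 ⊢
        omega
    -- Tge v v'
    have hgev : Tge P v v' := by
      constructor
      · intro x
        simp only [hv'def]
        omega
      · intro x y hxy
        rw [hdiff x, hdiff y]
        exact hww'.2 _ _ ((embHat_strictMono L).monotone hxy)
    have hveq : v' = v := hv.2 v' hv'T hgev
    -- conclude
    have hv'b : v' ⊥ = b - (s - 1) := by
      rw [hv'bot, hw'bot]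
    have hrank : b ≤ rankN (Hat P) + (s - 1) := by
      rw [hb]; exact rank_prod_le
    have hA : rankN (Hat P) ≤ v ⊥ := rank_le_vbot hv.1
    have hfin : v ⊥ = b - (s - 1) := by rw [← hveq, hv'b]
    omega
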